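/- Let μ, σ², L ≥ 0. There exists a Borel probability measure P supported in [0, L] with mean ∫ x dP = μ and second moment ∫ x² dP = μ² + σ² if and only if σ² ≤ μ(L − μ). -/

import Mathlib

open MeasureTheory

lemma integrable_dirac' {f : ℝ → ℝ} (hf : Measurable f) (a : ℝ) :
    Integrable f (Measure.dirac a) := by
  refine Integrable.mono' (integrable_const (‖f a‖)) hf.aestronglyMeasurable ?_
  rw [MeasureTheory.ae_dirac_eq]
  exact Filter.eventually_pure.2 le_rfl

theorem stmt15 (μ s2 L : ℝ) (hμ : 0 ≤ μ) (hs2 : 0 ≤ s2) (hL : 0 ≤ L) :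
    (∃ P : Measure ℝ, IsProbabilityMeasure P ∧ P (Set.Icc 0 L) = 1 ∧
      (∫ x, x ∂P) = μ ∧ (∫ x, x ^ 2 ∂P) = μ ^ 2 + s2) ↔ s2 ≤ μ * (L - μ) := by
  constructor
  · rintro ⟨P, hP, hsupp, hmean, hsq⟩
    -- a.e. x ∈ Icc 0 L
    have hae : ∀ᵐ x ∂P, x ∈ Set.Icc 0 L := by
      rw [MeasureTheory.ae_iff]
      have : P (Set.Icc 0 L)ᶜ = 0 := by
        rw [measure_compl measurableSet_Icc (measure_ne_top P _), hsupp, measure_univ,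
          tsub_self]
      exact this
    have hint1 : Integrable (fun x : ℝ => x) P := by
      refine Integrable.mono' (integrable_const L) measurable_id.aestronglyMeasurable ?_
      filter_upwards [hae] with x hx
      rw [Real.norm_eq_abs, abs_of_nonneg hx.1]; exact hx.2
    have hint2 : Integrable (fun x : ℝ => x ^ 2) P := by
      refine Integrable.mono' (integrable_const (L ^ 2)) (by fun_prop) ?_
      filter_upwards [hae] with x hx
      rw [Real.norm_eq_abs, abs_of_nonneg (sq_nonneg x)]
      exact pow_le_pow_left₀ hx.1 hx.2 2
    have hle : (∫ x, x ^ 2 ∂P) ≤ ∫ x, L * x ∂P := by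
      refine integral_mono_ae hint2 (hint1.const_mul L) ?_
      filter_upwards [hae] with x hx
      calc x ^ 2 = x * x := sq x
        _ ≤ L * x := mul_le_mul_of_nonneg_right hx.2 hx.1
    rw [hsq, integral_const_mul, hmean] at hle
    nlinarith
  · intro h
    rcases eq_or_lt_of_le hμ with hμ0 | hμ0
    · -- μ = 0, hence s2 = 0 ; take dirac 0
      have hs20 : s2 = 0 := le_antisymm (by nlinarith) hs2
      refine ⟨Measure.dirac 0, Measure.dirac.isProbabilityMeasure, ?_, ?_, ?_⟩
      · rw [Measure.dirac_apply' 0 measurableSet_Icc]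
        simp [Set.indicator_of_mem, Set.mem_Icc, hL]
      · rw [integral_dirac]; exact hμ0
      · rw [integral_dirac]; rw [← hμ0, hs20]; ring
    · set c : ℝ := μ + s2 / μ with hc
      have hc0 : 0 < c := by positivity
      have hcL : c ≤ L := by
        have hd : s2 / μ * μ = s2 := div_mul_cancel₀ _ hμ0.ne'
        rw [hc]; nlinarith
      set p : ℝ := μ / c with hp
      have hp0 : 0 ≤ p := by positivity
      have hp1 : p ≤ 1 := by
        rw [hp, div_le_one hc0, hc]
        have := div_nonneg hs2 hμ0.le; linarith
      have hpc : p * c = μ := div_mul_cancel₀ μ hc0.ne'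
      have hpc2 : p * c ^ 2 = μ ^ 2 + s2 := by
        have : p * c ^ 2 = (p * c) * c := by ring
        rw [this, hpc, hc]
        field_simp
      refine ⟨ENNReal.ofReal (1 - p) • Measure.dirac 0 + ENNReal.ofReal p • Measure.dirac c,
        ?_, ?_, ?_, ?_⟩
      · constructor
        simp only [Measure.add_apply, Measure.smul_apply, smul_eq_mul, measure_univ, mul_one]
        rw [← ENNReal.ofReal_add (by linarith) hp0]
        norm_num
      · simp only [Measure.add_apply, Measure.smul_apply, smul_eq_mul]
        rw [Measure.dirac_apply' 0 measurableSet_Icc, Measure.dirac_apply' c measurableSet_Icc,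
          Set.indicator_of_mem (Set.mem_Icc.2 ⟨le_refl 0, hL⟩),
          Set.indicator_of_mem (Set.mem_Icc.2 ⟨hc0.le, hcL⟩)]
        simp only [Pi.one_apply, mul_one]
        rw [← ENNReal.ofReal_add (by linarith) hp0]
        norm_num
      · rw [integral_add_measure ((integrable_dirac' (f := fun x : ℝ => x) (by fun_prop) 0).smul_measure
            ENNReal.ofReal_ne_top) ((integrable_dirac' (f := fun x : ℝ => x) (by fun_prop) c).smul_measure
            ENNReal.ofReal_ne_top),
          integral_smul_measure, integral_smul_measure, integral_dirac, integral_dirac,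
          ENNReal.toReal_ofReal hp0]
        simp only [smul_eq_mul, mul_zero, zero_add]
        rw [← hpc]
      · rw [integral_add_measure ((integrable_dirac' (by fun_prop) 0).smul_measure
            ENNReal.ofReal_ne_top) ((integrable_dirac' (by fun_prop) c).smul_measure
            ENNReal.ofReal_ne_top),
          integral_smul_measure, integral_smul_measure, integral_dirac, integral_dirac,
          ENNReal.toReal_ofReal hp0]
        simp only [smul_eq_mul, ne_eq, OfNat.ofNat_ne_zero, not_false_eq_true, zero_pow,
          mul_zero, zero_add]
        rw [← hpc2]
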